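/- There is no edge-colored complete graph K_n with n ≥ 6 that contains no monochromatic triangle, is non-degenerate, and in which some vertex lies on a properly colored 4-cycle but on no properly colored 5-cycle. Equivalently: in a non-degenerate edge-colored K_n (n ≥ 6) with no monochromatic triangle, every vertex lying on a PC quadrangle also lies on a PC pentagon. -/

import Mathlib

/-- An edge-colored graph (with total symmetric coloring `col`) contains a
monochromatic triangle. -/
def HasMonoTriangle {V : Type*} (col : V → V → ℕ) : Prop :=
  ∃ x y z : V, x ≠ y ∧ y ≠ z ∧ x ≠ z ∧ col x y = col y z ∧ col x y = col x z

/-- `c : ZMod ℓ → V` is a properly colored cycle of length `ℓ` in the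
edge-colored complete graph with coloring `col`. -/
def IsPCCycle {V : Type*} {ℓ : ℕ} (col : V → V → ℕ) (c : ZMod ℓ → V) : Prop :=
  Function.Injective c ∧
    ∀ i : ZMod ℓ, col (c i) (c (i + 1)) ≠ col (c (i + 1)) (c (i + 2))

/-- There is a properly colored cycle of length `ℓ` through `v`. -/
def PCThrough {V : Type*} (col : V → V → ℕ) (ℓ : ℕ) (v : V) : Prop :=
  ∃ c : ZMod ℓ → V, IsPCCycle col c ∧ ∃ i, c i = v

/-- `S` is a degenerate set of the edge-colored complete graph `col`. -/
def DegenSet {V : Type*} (col : V → V → ℕ) (S : Set V) : Prop :=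
  S.Nonempty ∧ ∃ f : V → ℕ,
    (∀ u ∈ S, ∀ v ∈ S, u ≠ v → col u v = f u ∨ col u v = f v) ∧
    (∀ u ∈ S, ∀ v, v ∉ S → col u v = f u)

namespace PCPQ

lemma lemA (e1 e2 e3 e4 a1 a2 a3 a4 : ℕ)
    (h0 : e1 ≠ e2) (h1 : e2 ≠ e3) (h2 : e3 ≠ e4) (h3 : e4 ≠ e1)
    (h4 : e1 = e2 ∨ e2 = e3 ∨ e3 = a4 ∨ a4 = a1 ∨ a1 = e1)
    (h5 : e1 = e2 ∨ e2 = a3 ∨ a3 = a4 ∨ a4 = e4 ∨ e4 = e1)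
    (h6 : e1 = a2 ∨ a2 = a3 ∨ a3 = e3 ∨ e3 = e4 ∨ e4 = e1)
    (h7 : e4 = e3 ∨ e3 = e2 ∨ e2 = a2 ∨ a2 = a1 ∨ a1 = e4)
    (h8 : ¬(e1 = a2 ∧ e1 = a1)) (h9 : ¬(e4 = a4 ∧ e4 = a1))
    (h10 : ¬(e2 = a3 ∧ e2 = a2)) (h11 : ¬(e3 = a4 ∧ e3 = a3)) :
    (a1 = e1 ∧ a2 = e2 ∧ a3 = e3 ∧ a4 = e4) ∨ (a1 = e4 ∧ a2 = e1 ∧ a3 = e2 ∧ a4 = e3) ∨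
      (a1 = a2 ∧ a1 = a3 ∧ a1 = a4) := by
  rcases h4 with c0|c0|c0|c0|c0
  ·
    exact (h0 (by omega)).elim
  ·
    exact (h1 (by omega)).elim
  ·
    rcases h5 with c1|c1|c1|c1|c1
    ·
      exact (h0 (by omega)).elim
    ·
      rcases h6 with c2|c2|c2|c2|c2
      ·
        rcases h7 with c3|c3|c3|c3|c3
        ·
          exact (h2 (by omega)).elim
        ·
          exact (h11 ⟨by omega, by omega⟩).elim
        ·
          exact (h10 ⟨by omega, by omega⟩).elim
        ·
          exact (h8 ⟨by omega, by omega⟩).elim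
        ·
          exact Or.inr (Or.inl ⟨by omega, by omega, by omega, by omega⟩)
      ·
        exact (h10 ⟨by omega, by omega⟩).elim
      ·
        exact (h11 ⟨by omega, by omega⟩).elim
      ·
        exact (h2 (by omega)).elim
      ·
        exact (h3 (by omega)).elim
    ·
      exact (h11 ⟨by omega, by omega⟩).elim
    ·
      exact (h2 (by omega)).elim
    ·
      exact (h3 (by omega)).elim
  ·
    rcases h5 with c1|c1|c1|c1|c1
    ·
      exact (h0 (by omega)).elim
    ·
      rcases h6 with c2|c2|c2|c2|c2
      ·
        rcases h7 with c3|c3|c3|c3|c3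
        ·
          exact (h2 (by omega)).elim
        ·
          exact (h1 (by omega)).elim
        ·
          exact (h10 ⟨by omega, by omega⟩).elim
        ·
          exact (h8 ⟨by omega, by omega⟩).elim
        ·
          exact (h9 ⟨by omega, by omega⟩).elim
      ·
        exact (h10 ⟨by omega, by omega⟩).elim
      ·
        exact (h1 (by omega)).elim
      ·
        exact (h2 (by omega)).elim
      ·
        exact (h3 (by omega)).elim
    ·
      rcases h6 with c2|c2|c2|c2|c2
      ·
        rcases h7 with c3|c3|c3|c3|c3
        ·
          exact (h2 (by omega)).elim
        ·
          exact (h1 (by omega)).elim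
        ·
          exact (h0 (by omega)).elim
        ·
          exact (h8 ⟨by omega, by omega⟩).elim
        ·
          exact (h9 ⟨by omega, by omega⟩).elim
      ·
        exact Or.inr (Or.inr ⟨by omega, by omega, by omega⟩)
      ·
        exact (h11 ⟨by omega, by omega⟩).elim
      ·
        exact (h2 (by omega)).elim
      ·
        exact (h3 (by omega)).elim
    ·
      exact (h9 ⟨by omega, by omega⟩).elim
    ·
      exact (h3 (by omega)).elim
  ·
    rcases h5 with c1|c1|c1|c1|c1
    ·
      exact (h0 (by omega)).elim
    ·
      rcases h6 with c2|c2|c2|c2|c2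
      ·
        exact (h8 ⟨by omega, by omega⟩).elim
      ·
        exact (h10 ⟨by omega, by omega⟩).elim
      ·
        exact (h1 (by omega)).elim
      ·
        exact (h2 (by omega)).elim
      ·
        exact (h3 (by omega)).elim
    ·
      rcases h6 with c2|c2|c2|c2|c2
      ·
        exact (h8 ⟨by omega, by omega⟩).elim
      ·
        rcases h7 with c3|c3|c3|c3|c3
        ·
          exact (h2 (by omega)).elim
        ·
          exact (h1 (by omega)).elim
        ·
          exact (h10 ⟨by omega, by omega⟩).elim
        ·
          exact (h8 ⟨by omega, by omega⟩).elim
        ·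
          exact (h3 (by omega)).elim
      ·
        exact (h11 ⟨by omega, by omega⟩).elim
      ·
        exact (h2 (by omega)).elim
      ·
        exact (h3 (by omega)).elim
    ·
      rcases h6 with c2|c2|c2|c2|c2
      ·
        exact (h8 ⟨by omega, by omega⟩).elim
      ·
        rcases h7 with c3|c3|c3|c3|c3
        ·
          exact (h2 (by omega)).elim
        ·
          exact (h1 (by omega)).elim
        ·
          exact (h10 ⟨by omega, by omega⟩).elim
        ·
          exact (h8 ⟨by omega, by omega⟩).elim
        ·
          exact (h9 ⟨by omega, by omega⟩).elim
      ·
        rcases h7 with c3|c3|c3|c3|c3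
        ·
          exact (h11 ⟨by omega, by omega⟩).elim
        ·
          exact (h1 (by omega)).elim
        ·
          exact Or.inl ⟨by omega, by omega, by omega, by omega⟩
        ·
          exact (h8 ⟨by omega, by omega⟩).elim
        ·
          exact (h9 ⟨by omega, by omega⟩).elim
      ·
        exact (h2 (by omega)).elim
      ·
        exact (h9 ⟨by omega, by omega⟩).elim
    ·
      exact (h3 (by omega)).elim

lemma lemB (e1 e2 e3 e4 d1 d2 a1 a2 a3 a4 b1 b2 b3 b4 m : ℕ)
    (h0 : e1 ≠ e2) (h1 : e2 ≠ e3) (h2 : e3 ≠ e4) (h3 : e4 ≠ e1) (h4 : a1 = e1) (h5 : a2 = e2) (h6 : a3 = e3) (h7 : a4 = e4) (h8 : b1 = e4) (h9 : b2 = e1) (h10 : b3 = e2) (h11 : b4 = e3) (h12 : (d1 = b3 ∨ b3 = b4 ∨ b4 = a4 ∨ a4 = a1 ∨ a1 = d1)) (h13 : (e4 = b4 ∨ b4 = b3 ∨ b3 = a3 ∨ a3 = a1 ∨ a1 = e4)) (h14 : (a1 = a4 ∨ a4 = e3 ∨ e3 = b3 ∨ b3 = b1 ∨ b1 = a1)) (h15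 : ¬(d1 = a3 ∧ d1 = a1)) (h16 : ¬(d1 = b3 ∧ d1 = b1)) :
    False := by omega

lemma lemC (e1 e2 e3 e4 d1 d2 a1 a2 a3 a4 b1 b2 b3 b4 m : ℕ)
    (h0 : e1 ≠ e2) (h1 : e2 ≠ e3) (h2 : e3 ≠ e4) (h3 : e4 ≠ e1) (h4 : b1 = e1) (h5 : b2 = e2) (h6 : b3 = e3) (h7 : b4 = e4) (h8 : a1 = a2) (h9 : a1 = a3) (h10 : a1 = a4) (h11 : (e1 = b2 ∨ b2 = m ∨ m = a4 ∨ a4 = e4 ∨ e4 = e1)) (h12 : (e4 = e3 ∨ e3 = a3 ∨ a3 = m ∨ m = b1 ∨ b1 = e4)) (h13 : ¬(e4 = a4 ∧ e4 = a1)) (h14 : ¬(e3 = a4 ∧ e3 = a3)) :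
    m = a1 := by omega

lemma lemD (e1 e2 e3 e4 d1 d2 a1 a2 a3 a4 b1 b2 b3 b4 m : ℕ)
    (h0 : e1 ≠ e2) (h1 : e2 ≠ e3) (h2 : e3 ≠ e4) (h3 : e4 ≠ e1) (h4 : a1 = a2) (h5 : a1 = a3) (h6 : a1 = a4) (h7 : b1 = b2) (h8 : b1 = b3) (h9 : b1 = b4) (h10 : (e4 = e3 ∨ e3 = b3 ∨ b3 = m ∨ m = a1 ∨ a1 = e4)) (h11 : ¬(e4 = a4 ∧ e4 = a1)) (h12 : ¬(e3 = b4 ∧ e3 = b3)) :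
    m = a1 ∨ m = b1 := by omega

lemma lemE (e1 e2 e3 e4 d1 d2 a1 a2 a3 a4 b1 b2 b3 b4 m : ℕ)
    (h0 : e1 ≠ e2) (h1 : e2 ≠ e3) (h2 : e3 ≠ e4) (h3 : e4 ≠ e1) (h4 : a1 = e1) (h5 : a2 = e2) (h6 : a3 = e3) (h7 : a4 = e4) (h8 : b1 = e1) (h9 : b2 = e2) (h10 : b3 = e3) (h11 : b4 = e4) (h12 : (e4 = d2 ∨ d2 = b2 ∨ b2 = m ∨ m = a1 ∨ a1 = e4)) (h13 : (d1 = e3 ∨ e3 = b4 ∨ b4 = m ∨ m = a1 ∨ a1 = d1)) (h14 : ¬(a1 = m ∧ a1 = b1)) (h15 : ¬(a2 = m ∧ a2 = b2)) (h16 : ¬(a4 = m ∧ a4 = b4)) :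
    (d1 = e1 ∨ d1 = e3) ∧ (d2 = e2 ∨ d2 = e4) := by omega

lemma fail5 {V : Type*} (col : V → V → ℕ) (v x1 x2 x3 x4 : V)
    (hno : ¬ PCThrough col 5 v)
    (d01 : v ≠ x1) (d02 : v ≠ x2) (d03 : v ≠ x3) (d04 : v ≠ x4)
    (d12 : x1 ≠ x2) (d13 : x1 ≠ x3) (d14 : x1 ≠ x4)
    (d23 : x2 ≠ x3) (d24 : x2 ≠ x4) (d34 : x3 ≠ x4) :
    col v x1 = col x1 x2 ∨ col x1 x2 = col x2 x3 ∨ col x2 x3 = col x3 x4 ∨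
      col x3 x4 = col x4 v ∨ col x4 v = col v x1 := by
  by_contra h
  push_neg at h
  obtain ⟨h1, h2, h3, h4, h5⟩ := h
  apply hno
  refine ⟨![v, x1, x2, x3, x4], ⟨?_, ?_⟩, 0, rfl⟩
  · intro a b hab
    fin_cases a <;> fin_cases b <;> simp_all <;> rfl
  · intro j
    fin_cases j <;> simpa using (by assumption)

lemma tri {V : Type*} (col : V → V → ℕ) (hmono : ¬ HasMonoTriangle col) (x y z : V)
    (hxy : x ≠ y) (hyz : y ≠ z) (hxz : x ≠ z) :
    ¬(col x y = col y z ∧ col x y = col x z) :=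
  fun ⟨p, q⟩ => hmono ⟨x, y, z, hxy, hyz, hxz, p, q⟩

def Fwd {V : Type*} (col : V → V → ℕ) (v1 v2 v3 v4 x : V) : Prop :=
  col v1 x = col v1 v2 ∧ col v2 x = col v2 v3 ∧ col v3 x = col v3 v4 ∧ col v4 x = col v1 v4

def Bwd {V : Type*} (col : V → V → ℕ) (v1 v2 v3 v4 x : V) : Prop :=
  col v1 x = col v1 v4 ∧ col v2 x = col v1 v2 ∧ col v3 x = col v2 v3 ∧ col v4 x = col v3 v4

def Cst {V : Type*} (col : V → V → ℕ) (v1 v2 v3 v4 x : V) : Prop :=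
  col v1 x = col v2 x ∧ col v1 x = col v3 x ∧ col v1 x = col v4 x


lemma classify {V : Type*} (col : V → V → ℕ) (hsym : ∀ a b, col a b = col b a)
    (hmono : ¬ HasMonoTriangle col) (v1 v2 v3 v4 : V)
    (n12 : v1 ≠ v2) (n13 : v1 ≠ v3) (n14 : v1 ≠ v4) (n23 : v2 ≠ v3) (n24 : v2 ≠ v4) (n34 : v3 ≠ v4)
    (p1 : col v1 v2 ≠ col v2 v3) (p2 : col v2 v3 ≠ col v3 v4)
    (p3 : col v3 v4 ≠ col v1 v4) (p4 : col v1 v4 ≠ col v1 v2)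
    (hno5 : ¬ PCThrough col 5 v1)
    (u : V) (hu1 : u ≠ v1) (hu2 : u ≠ v2) (hu3 : u ≠ v3) (hu4 : u ≠ v4) :
    Fwd col v1 v2 v3 v4 u ∨ Bwd col v1 v2 v3 v4 u ∨ Cst col v1 v2 v3 v4 u := by
  have F1 := fail5 col v1 v2 v3 v4 u hno5 n12 n13 n14 hu1.symm n23 n24 hu2.symm n34 hu3.symm hu4.symm
  rw [hsym u v1] at F1
  have F2 := fail5 col v1 v2 v3 u v4 hno5 n12 n13 hu1.symm n14 n23 hu2.symm n24 hu3.symm n34 hu4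
  rw [hsym u v4, hsym v4 v1] at F2
  have F3 := fail5 col v1 v2 u v3 v4 hno5 n12 hu1.symm n13 n14 hu2.symm n23 n24 hu3 hu4 n34
  rw [hsym u v3, hsym v4 v1] at F3
  have F4 := fail5 col v1 v4 v3 v2 u hno5 n14 n13 n12 hu1.symm n34.symm n24.symm hu4.symm n23.symm hu3.symm hu2.symm
  rw [hsym v4 v3, hsym v3 v2, hsym u v1] at F4
  have T1 := tri col hmono v1 v2 u n12 hu2.symm hu1.symm
  have T2 := tri col hmono v1 v4 u n14 hu4.symm hu1.symm
  have T3 := tri col hmono v2 v3 u n23 hu3.symm hu2.symm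
  have T4 := tri col hmono v3 v4 u n34 hu4.symm hu3.symm
  exact lemA (col v1 v2) (col v2 v3) (col v3 v4) (col v1 v4) (col v1 u) (col v2 u) (col v3 u) (col v4 u) p1 p2 p3 p4 F1 F2 F3 F4 T1 T2 T3 T4


lemma noFB {V : Type*} (col : V → V → ℕ) (hsym : ∀ a b, col a b = col b a)
    (hmono : ¬ HasMonoTriangle col) (v1 v2 v3 v4 : V)
    (n12 : v1 ≠ v2) (n13 : v1 ≠ v3) (n14 : v1 ≠ v4) (n23 : v2 ≠ v3) (n24 : v2 ≠ v4) (n34 : v3 ≠ v4)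
    (p1 : col v1 v2 ≠ col v2 v3) (p2 : col v2 v3 ≠ col v3 v4)
    (p3 : col v3 v4 ≠ col v1 v4) (p4 : col v1 v4 ≠ col v1 v2)
    (hno5 : ¬ PCThrough col 5 v1)
    (u : V) (hu1 : u ≠ v1) (hu2 : u ≠ v2) (hu3 : u ≠ v3) (hu4 : u ≠ v4)
    (w : V) (hw1 : w ≠ v1) (hw2 : w ≠ v2) (hw3 : w ≠ v3) (hw4 : w ≠ v4) (huw : u ≠ w)
    (hf : Fwd col v1 v2 v3 v4 u) (hb : Bwd col v1 v2 v3 v4 w) :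
    False := by
  have F1 := fail5 col v1 v3 w v4 u hno5 n13 hw1.symm n14 hu1.symm hw3.symm n34 hu3.symm hw4 huw.symm hu4.symm
  rw [hsym w v4, hsym u v1] at F1
  have F2 := fail5 col v1 v4 w v3 u hno5 n14 hw1.symm n13 hu1.symm hw4.symm n34.symm hu4.symm hw3 huw.symm hu3.symm
  rw [hsym w v3, hsym u v1] at F2
  have F3 := fail5 col v1 u v4 v3 w hno5 hu1.symm n14 n13 hw1.symm hu4 hu3 huw n34.symm hw4.symm hw3.symm
  rw [hsym u v4, hsym v4 v3, hsym w v1] at F3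
  have T1 := tri col hmono v1 v3 u n13 hu3.symm hu1.symm
  have T2 := tri col hmono v1 v3 w n13 hw3.symm hw1.symm
  exact lemB (col v1 v2) (col v2 v3) (col v3 v4) (col v1 v4) (col v1 v3) (col v2 v4) (col v1 u) (col v2 u) (col v3 u) (col v4 u) (col v1 w) (col v2 w) (col v3 w) (col v4 w) (col u w) p1 p2 p3 p4 hf.1 hf.2.1 hf.2.2.1 hf.2.2.2 hb.1 hb.2.1 hb.2.2.1 hb.2.2.2 F1 F2 F3 T1 T2


lemma constFwd {V : Type*} (col : V → V → ℕ) (hsym : ∀ a b, col a b = col b a)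
    (hmono : ¬ HasMonoTriangle col) (v1 v2 v3 v4 : V)
    (n12 : v1 ≠ v2) (n13 : v1 ≠ v3) (n14 : v1 ≠ v4) (n23 : v2 ≠ v3) (n24 : v2 ≠ v4) (n34 : v3 ≠ v4)
    (p1 : col v1 v2 ≠ col v2 v3) (p2 : col v2 v3 ≠ col v3 v4)
    (p3 : col v3 v4 ≠ col v1 v4) (p4 : col v1 v4 ≠ col v1 v2)
    (hno5 : ¬ PCThrough col 5 v1)
    (u : V) (hu1 : u ≠ v1) (hu2 : u ≠ v2) (hu3 : u ≠ v3) (hu4 : u ≠ v4)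
    (w : V) (hw1 : w ≠ v1) (hw2 : w ≠ v2) (hw3 : w ≠ v3) (hw4 : w ≠ v4) (huw : u ≠ w)
    (hc : Cst col v1 v2 v3 v4 u) (hf : Fwd col v1 v2 v3 v4 w) :
    col u w = col v1 u := by
  have F1 := fail5 col v1 v2 w u v4 hno5 n12 hw1.symm hu1.symm n14 hw2.symm hu2.symm n24 huw.symm hw4 hu4
  rw [hsym w u, hsym u v4, hsym v4 v1] at F1
  have F2 := fail5 col v1 v4 v3 u w hno5 n14 n13 hu1.symm hw1.symm n34.symm hu4.symm hw4.symm hu3.symm hw3.symm huw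
  rw [hsym v4 v3, hsym w v1] at F2
  have T1 := tri col hmono v1 v4 u n14 hu4.symm hu1.symm
  have T2 := tri col hmono v3 v4 u n34 hu4.symm hu3.symm
  exact lemC (col v1 v2) (col v2 v3) (col v3 v4) (col v1 v4) (col v1 v3) (col v2 v4) (col v1 u) (col v2 u) (col v3 u) (col v4 u) (col v1 w) (col v2 w) (col v3 w) (col v4 w) (col u w) p1 p2 p3 p4 hf.1 hf.2.1 hf.2.2.1 hf.2.2.2 hc.1 hc.2.1 hc.2.2 F1 F2 T1 T2


lemma constBwd {V : Type*} (col : V → V → ℕ) (hsym : ∀ a b, col a b = col b a)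
    (hmono : ¬ HasMonoTriangle col) (v1 v2 v3 v4 : V)
    (n12 : v1 ≠ v2) (n13 : v1 ≠ v3) (n14 : v1 ≠ v4) (n23 : v2 ≠ v3) (n24 : v2 ≠ v4) (n34 : v3 ≠ v4)
    (p1 : col v1 v2 ≠ col v2 v3) (p2 : col v2 v3 ≠ col v3 v4)
    (p3 : col v3 v4 ≠ col v1 v4) (p4 : col v1 v4 ≠ col v1 v2)
    (hno5 : ¬ PCThrough col 5 v1)
    (u : V) (hu1 : u ≠ v1) (hu2 : u ≠ v2) (hu3 : u ≠ v3) (hu4 : u ≠ v4)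
    (w : V) (hw1 : w ≠ v1) (hw2 : w ≠ v2) (hw3 : w ≠ v3) (hw4 : w ≠ v4) (huw : u ≠ w)
    (hc : Cst col v1 v2 v3 v4 u) (hb : Bwd col v1 v2 v3 v4 w) :
    col u w = col v1 u := by
  have F1 := fail5 col v1 v4 w u v2 hno5 n14 hw1.symm hu1.symm n12 hw4.symm hu4.symm n24.symm huw.symm hw2 hu2
  rw [hsym w u, hsym u v2, hsym v2 v1] at F1
  have F2 := fail5 col v1 v2 v3 u w hno5 n12 n13 hu1.symm hw1.symm n23 hu2.symm hw2.symm hu3.symm hw3.symm huw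
  rw [hsym w v1] at F2
  have T1 := tri col hmono v1 v2 u n12 hu2.symm hu1.symm
  have T2 := tri col hmono v3 v2 u n23.symm hu2.symm hu3.symm
  rw [hsym v3 v2] at T2
  exact lemC (col v1 v4) (col v3 v4) (col v2 v3) (col v1 v2) (col v1 v3) (col v2 v4) (col v1 u) (col v4 u) (col v3 u) (col v2 u) (col v1 w) (col v4 w) (col v3 w) (col v2 w) (col u w) p3.symm p2.symm p1.symm p4.symm hb.1 hb.2.2.2 hb.2.2.1 hb.2.1 hc.2.2 hc.2.1 hc.1 F1 F2 T1 T2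


lemma constPair {V : Type*} (col : V → V → ℕ) (hsym : ∀ a b, col a b = col b a)
    (hmono : ¬ HasMonoTriangle col) (v1 v2 v3 v4 : V)
    (n12 : v1 ≠ v2) (n13 : v1 ≠ v3) (n14 : v1 ≠ v4) (n23 : v2 ≠ v3) (n24 : v2 ≠ v4) (n34 : v3 ≠ v4)
    (p1 : col v1 v2 ≠ col v2 v3) (p2 : col v2 v3 ≠ col v3 v4)
    (p3 : col v3 v4 ≠ col v1 v4) (p4 : col v1 v4 ≠ col v1 v2)
    (hno5 : ¬ PCThrough col 5 v1)
    (u : V) (hu1 : u ≠ v1) (hu2 : u ≠ v2) (hu3 : u ≠ v3) (hu4 : u ≠ v4)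
    (w : V) (hw1 : w ≠ v1) (hw2 : w ≠ v2) (hw3 : w ≠ v3) (hw4 : w ≠ v4) (huw : u ≠ w)
    (hc : Cst col v1 v2 v3 v4 u) (hd : Cst col v1 v2 v3 v4 w) :
    col u w = col v1 u ∨ col u w = col v1 w := by
  have F1 := fail5 col v1 v4 v3 w u hno5 n14 n13 hw1.symm hu1.symm n34.symm hw4.symm hu4.symm hw3.symm hu3.symm huw.symm
  rw [hsym v4 v3, hsym w u, hsym u v1] at F1
  have T1 := tri col hmono v1 v4 u n14 hu4.symm hu1.symm
  have T2 := tri col hmono v3 v4 w n34 hw4.symm hw3.symm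
  exact lemD (col v1 v2) (col v2 v3) (col v3 v4) (col v1 v4) (col v1 v3) (col v2 v4) (col v1 u) (col v2 u) (col v3 u) (col v4 u) (col v1 w) (col v2 w) (col v3 w) (col v4 w) (col u w) p1 p2 p3 p4 hc.1 hc.2.1 hc.2.2 hd.1 hd.2.1 hd.2.2 F1 T1 T2


lemma diagF {V : Type*} (col : V → V → ℕ) (hsym : ∀ a b, col a b = col b a)
    (hmono : ¬ HasMonoTriangle col) (v1 v2 v3 v4 : V)
    (n12 : v1 ≠ v2) (n13 : v1 ≠ v3) (n14 : v1 ≠ v4) (n23 : v2 ≠ v3) (n24 : v2 ≠ v4) (n34 : v3 ≠ v4)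
    (p1 : col v1 v2 ≠ col v2 v3) (p2 : col v2 v3 ≠ col v3 v4)
    (p3 : col v3 v4 ≠ col v1 v4) (p4 : col v1 v4 ≠ col v1 v2)
    (hno5 : ¬ PCThrough col 5 v1)
    (u : V) (hu1 : u ≠ v1) (hu2 : u ≠ v2) (hu3 : u ≠ v3) (hu4 : u ≠ v4)
    (w : V) (hw1 : w ≠ v1) (hw2 : w ≠ v2) (hw3 : w ≠ v3) (hw4 : w ≠ v4) (huw : u ≠ w)
    (hf : Fwd col v1 v2 v3 v4 u) (hg : Fwd col v1 v2 v3 v4 w) :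
    (col v1 v3 = col v1 v2 ∨ col v1 v3 = col v3 v4) ∧ (col v2 v4 = col v2 v3 ∨ col v2 v4 = col v1 v4) := by
  have F1 := fail5 col v1 v4 v2 w u hno5 n14 n12 hw1.symm hu1.symm n24.symm hw4.symm hu4.symm hw2.symm hu2.symm huw.symm
  rw [hsym v4 v2, hsym w u, hsym u v1] at F1
  have F2 := fail5 col v1 v3 v4 w u hno5 n13 n14 hw1.symm hu1.symm n34 hw3.symm hu3.symm hw4.symm hu4.symm huw.symm
  rw [hsym w u, hsym u v1] at F2
  have T1 := tri col hmono v1 u w hu1.symm huw hw1.symm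
  have T2 := tri col hmono v2 u w hu2.symm huw hw2.symm
  have T3 := tri col hmono v4 u w hu4.symm huw hw4.symm
  exact lemE (col v1 v2) (col v2 v3) (col v3 v4) (col v1 v4) (col v1 v3) (col v2 v4) (col v1 u) (col v2 u) (col v3 u) (col v4 u) (col v1 w) (col v2 w) (col v3 w) (col v4 w) (col u w) p1 p2 p3 p4 hf.1 hf.2.1 hf.2.2.1 hf.2.2.2 hg.1 hg.2.1 hg.2.2.1 hg.2.2.2 F1 F2 T1 T2 T3


lemma diagB {V : Type*} (col : V → V → ℕ) (hsym : ∀ a b, col a b = col b a)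
    (hmono : ¬ HasMonoTriangle col) (v1 v2 v3 v4 : V)
    (n12 : v1 ≠ v2) (n13 : v1 ≠ v3) (n14 : v1 ≠ v4) (n23 : v2 ≠ v3) (n24 : v2 ≠ v4) (n34 : v3 ≠ v4)
    (p1 : col v1 v2 ≠ col v2 v3) (p2 : col v2 v3 ≠ col v3 v4)
    (p3 : col v3 v4 ≠ col v1 v4) (p4 : col v1 v4 ≠ col v1 v2)
    (hno5 : ¬ PCThrough col 5 v1)
    (u : V) (hu1 : u ≠ v1) (hu2 : u ≠ v2) (hu3 : u ≠ v3) (hu4 : u ≠ v4)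
    (w : V) (hw1 : w ≠ v1) (hw2 : w ≠ v2) (hw3 : w ≠ v3) (hw4 : w ≠ v4) (huw : u ≠ w)
    (hf : Bwd col v1 v2 v3 v4 u) (hg : Bwd col v1 v2 v3 v4 w) :
    (col v1 v3 = col v1 v4 ∨ col v1 v3 = col v2 v3) ∧ (col v2 v4 = col v3 v4 ∨ col v2 v4 = col v1 v2) := by
  have F1 := fail5 col v1 v2 v4 w u hno5 n12 n14 hw1.symm hu1.symm n24 hw2.symm hu2.symm hw4.symm hu4.symm huw.symm
  rw [hsym w u, hsym u v1] at F1
  have F2 := fail5 col v1 v3 v2 w u hno5 n13 n12 hw1.symm hu1.symm n23.symm hw3.symm hu3.symm hw2.symm hu2.symm huw.symm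
  rw [hsym v3 v2, hsym w u, hsym u v1] at F2
  have T1 := tri col hmono v1 u w hu1.symm huw hw1.symm
  have T2 := tri col hmono v4 u w hu4.symm huw hw4.symm
  have T3 := tri col hmono v2 u w hu2.symm huw hw2.symm
  exact lemE (col v1 v4) (col v3 v4) (col v2 v3) (col v1 v2) (col v1 v3) (col v2 v4) (col v1 u) (col v4 u) (col v3 u) (col v2 u) (col v1 w) (col v4 w) (col v3 w) (col v2 w) (col u w) p3.symm p2.symm p1.symm p4.symm hf.1 hf.2.2.2 hf.2.2.1 hf.2.1 hg.1 hg.2.2.2 hg.2.2.1 hg.2.1 F1 F2 T1 T2 T3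


lemma extract4 {V : Type*} (col : V → V → ℕ) (v : V) (h : PCThrough col 4 v) :
    ∃ v2 v3 v4 : V, v ≠ v2 ∧ v ≠ v3 ∧ v ≠ v4 ∧ v2 ≠ v3 ∧ v2 ≠ v4 ∧ v3 ≠ v4 ∧
      col v v2 ≠ col v2 v3 ∧ col v2 v3 ≠ col v3 v4 ∧ col v3 v4 ≠ col v4 v ∧
      col v4 v ≠ col v v2 := by
  obtain ⟨c, ⟨hinj, hpc⟩, i, rfl⟩ := h
  have key : ∀ a b : ZMod 4, a ≠ b → c (i + a) ≠ c (i + b) := by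
    intro a b hab h
    exact hab (by simpa using hinj h)
  have e0 : i + 0 = i := by ring
  have n1 : i + 1 + 1 = i + 2 := by ring
  have n2 : i + 1 + 2 = i + 3 := by ring
  have n3 : i + 2 + 1 = i + 3 := by ring
  have n4 : i + 2 + 2 = i := by ring_nf; rw [show (4 : ZMod 4) = 0 by decide]; ring
  have n5 : i + 3 + 1 = i := by ring_nf; rw [show (4 : ZMod 4) = 0 by decide]; ring
  have n6 : i + 3 + 2 = i + 1 := by ring_nf; rw [show (5 : ZMod 4) = 1 by decide]; try ring
  refine ⟨c (i + 1), c (i + 2), c (i + 3), ?_, ?_, ?_,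
    key 1 2 (by decide), key 1 3 (by decide), key 2 3 (by decide), ?_, ?_, ?_, ?_⟩
  · simpa [e0] using key 0 1 (by decide)
  · simpa [e0] using key 0 2 (by decide)
  · simpa [e0] using key 0 3 (by decide)
  · exact hpc i
  · have := hpc (i + 1); rwa [n1, n2] at this
  · have := hpc (i + 2); rwa [n3, n4] at this
  · have := hpc (i + 3); rwa [n5, n6] at this

end PCPQ

theorem pc_pentagon_of_pc_quadrangle
    (n : ℕ) (hn : 6 ≤ n) (col : Fin n → Fin n → ℕ)
    (hsym : ∀ u v, col u v = col v u)
    (hmono : ¬ HasMonoTriangle col)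
    (hnondeg : ¬ ∃ S : Set (Fin n), DegenSet col S) :
    ∀ v : Fin n, PCThrough col 4 v → PCThrough col 5 v := by
  intro v h4
  by_contra hno5
  obtain ⟨v2, v3, v4, n12, n13, n14, n23, n24, n34, p1, p2, P3, P4⟩ := PCPQ.extract4 col v h4
  have p3 : col v3 v4 ≠ col v v4 := by rwa [hsym v4 v] at P3
  have p4 : col v v4 ≠ col v v2 := by rwa [hsym v4 v] at P4
  have CL := PCPQ.classify col hsym hmono v v2 v3 v4 n12 n13 n14 n23 n24 n34 p1 p2 p3 p4 hno5
  obtain ⟨u0, w0, hu0w0, hu0, hw0⟩ :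
      ∃ u w0 : Fin n, u ≠ w0 ∧ (u ≠ v ∧ u ≠ v2 ∧ u ≠ v3 ∧ u ≠ v4) ∧
        (w0 ≠ v ∧ w0 ≠ v2 ∧ w0 ≠ v3 ∧ w0 ≠ v4) := by
    have hc4 : ({v, v2, v3, v4} : Finset (Fin n)).card ≤ 4 := by
      calc ({v, v2, v3, v4} : Finset (Fin n)).card
          ≤ ({v2, v3, v4} : Finset (Fin n)).card + 1 := Finset.card_insert_le _ _
        _ ≤ ({v3, v4} : Finset (Fin n)).card + 1 + 1 := by
            have := Finset.card_insert_le v2 ({v3, v4} : Finset (Fin n)); omega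
        _ ≤ ({v4} : Finset (Fin n)).card + 1 + 1 + 1 := by
            have := Finset.card_insert_le v3 ({v4} : Finset (Fin n)); omega
        _ ≤ 4 := by simp
    have hlt : 1 < (({v, v2, v3, v4} : Finset (Fin n))ᶜ).card := by
      have h1 := Finset.card_compl ({v, v2, v3, v4} : Finset (Fin n))
      have h2 : Fintype.card (Fin n) = n := Fintype.card_fin n
      omega
    obtain ⟨a, ha, b, hb, hab⟩ := Finset.one_lt_card.mp hlt
    simp only [Finset.mem_compl, Finset.mem_insert, Finset.mem_singleton, not_or] at ha hb
    exact ⟨a, b, hab, ⟨ha.1, ha.2.1, ha.2.2.1, ha.2.2.2⟩, ⟨hb.1, hb.2.1, hb.2.2.1, hb.2.2.2⟩⟩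
  apply hnondeg
  by_cases hK : ∃ x : Fin n, (x ≠ v ∧ x ≠ v2 ∧ x ≠ v3 ∧ x ≠ v4) ∧ PCPQ.Cst col v v2 v3 v4 x
  · obtain ⟨x0, hx0o, hx0c⟩ := hK
    refine ⟨{x : Fin n | (x ≠ v ∧ x ≠ v2 ∧ x ≠ v3 ∧ x ≠ v4) ∧ PCPQ.Cst col v v2 v3 v4 x},
      ⟨x0, hx0o, hx0c⟩, fun x => col v x, ?_, ?_⟩
    · rintro a ⟨hao, hac⟩ b ⟨hbo, hbc⟩ hab
      exact PCPQ.constPair col hsym hmono v v2 v3 v4 n12 n13 n14 n23 n24 n34 p1 p2 p3 p4 hno5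
        a hao.1 hao.2.1 hao.2.2.1 hao.2.2.2 b hbo.1 hbo.2.1 hbo.2.2.1 hbo.2.2.2 hab hac hbc
    · rintro a ⟨hao, hac⟩ y hy
      show col a y = col v a
      by_cases h1 : y = v
      · subst h1; exact hsym a y
      by_cases h2 : y = v2
      · subst h2; rw [hsym a y]; exact hac.1.symm
      by_cases h3 : y = v3
      · subst h3; rw [hsym a y]; exact hac.2.1.symm
      by_cases h4 : y = v4
      · subst h4; rw [hsym a y]; exact hac.2.2.symm
      have hay : a ≠ y := by
        intro h
        apply hy
        rw [← h]
        simp only [Set.mem_setOf_eq]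
        exact ⟨hao, hac⟩
      rcases CL y h1 h2 h3 h4 with hfy | hby | hcy
      · exact PCPQ.constFwd col hsym hmono v v2 v3 v4 n12 n13 n14 n23 n24 n34 p1 p2 p3 p4 hno5
          a hao.1 hao.2.1 hao.2.2.1 hao.2.2.2 y h1 h2 h3 h4 hay hac hfy
      · exact PCPQ.constBwd col hsym hmono v v2 v3 v4 n12 n13 n14 n23 n24 n34 p1 p2 p3 p4 hno5
          a hao.1 hao.2.1 hao.2.2.1 hao.2.2.2 y h1 h2 h3 h4 hay hac hby
      · refine absurd ?_ hy
        simp only [Set.mem_setOf_eq]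
        exact ⟨⟨h1, h2, h3, h4⟩, hcy⟩
  · push_neg at hK
    have CL2 : ∀ x : Fin n, x ≠ v → x ≠ v2 → x ≠ v3 → x ≠ v4 →
        PCPQ.Fwd col v v2 v3 v4 x ∨ PCPQ.Bwd col v v2 v3 v4 x := by
      intro x h1 h2 h3 h4
      rcases CL x h1 h2 h3 h4 with hf | hb | hc
      exacts [Or.inl hf, Or.inr hb, absurd hc (hK x ⟨h1, h2, h3, h4⟩)]
    rcases CL2 u0 hu0.1 hu0.2.1 hu0.2.2.1 hu0.2.2.2 with hfu | hbu
    · have hall : ∀ x : Fin n, x ≠ v → x ≠ v2 → x ≠ v3 → x ≠ v4 →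
          PCPQ.Fwd col v v2 v3 v4 x := by
        intro x h1 h2 h3 h4
        rcases CL2 x h1 h2 h3 h4 with hf | hb
        · exact hf
        · by_cases hxu : x = u0
          · subst hxu; exact absurd (hb.1.symm.trans hfu.1) p4
          · exact absurd hb (fun hbb => PCPQ.noFB col hsym hmono v v2 v3 v4
              n12 n13 n14 n23 n24 n34 p1 p2 p3 p4 hno5
              u0 hu0.1 hu0.2.1 hu0.2.2.1 hu0.2.2.2 x h1 h2 h3 h4
              (fun h => hxu h.symm) hfu hbb)
      have hw0f := hall w0 hw0.1 hw0.2.1 hw0.2.2.1 hw0.2.2.2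
      have hd := PCPQ.diagF col hsym hmono v v2 v3 v4 n12 n13 n14 n23 n24 n34 p1 p2 p3 p4 hno5
        u0 hu0.1 hu0.2.1 hu0.2.2.1 hu0.2.2.2 w0 hw0.1 hw0.2.1 hw0.2.2.1 hw0.2.2.2 hu0w0 hfu hw0f
      set f := fun z => if z = v then col v v2 else if z = v2 then col v2 v3
        else if z = v3 then col v3 v4 else col v v4 with hf
      have fv : f v = col v v2 := by simp [hf]
      have fv2 : f v2 = col v2 v3 := by simp [hf, Ne.symm n12]
      have fv3 : f v3 = col v3 v4 := by simp [hf, Ne.symm n13, Ne.symm n23]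
      have fv4 : f v4 = col v v4 := by simp [hf, Ne.symm n14, Ne.symm n24, Ne.symm n34]
      have s21 : col v2 v = col v v2 := hsym _ _
      have s31 : col v3 v = col v v3 := hsym _ _
      have s41 : col v4 v = col v v4 := hsym _ _
      have s32 : col v3 v2 = col v2 v3 := hsym _ _
      have s42 : col v4 v2 = col v2 v4 := hsym _ _
      have s43 : col v4 v3 = col v3 v4 := hsym _ _
      refine ⟨{v, v2, v3, v4}, ⟨v, by simp⟩, f, ?_, ?_⟩
      · intro a ha b hb hab
        simp only [Set.mem_insert_iff, Set.mem_singleton_iff] at ha hb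
        rcases ha with rfl | rfl | rfl | rfl <;> rcases hb with rfl | rfl | rfl | rfl <;>
          first
          | exact absurd rfl hab
          | omega
      · intro a ha y hy
        simp only [Set.mem_insert_iff, Set.mem_singleton_iff, not_or] at hy
        have hfy := hall y hy.1 hy.2.1 hy.2.2.1 hy.2.2.2
        simp only [Set.mem_insert_iff, Set.mem_singleton_iff] at ha
        rcases ha with rfl | rfl | rfl | rfl
        · rw [fv]; exact hfy.1
        · rw [fv2]; exact hfy.2.1
        · rw [fv3]; exact hfy.2.2.1
        · rw [fv4]; exact hfy.2.2.2
    · have hall : ∀ x : Fin n, x ≠ v → x ≠ v2 → x ≠ v3 → x ≠ v4 →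
          PCPQ.Bwd col v v2 v3 v4 x := by
        intro x h1 h2 h3 h4
        rcases CL2 x h1 h2 h3 h4 with hf | hb
        · by_cases hxu : x = u0
          · subst hxu; exact absurd (hbu.1.symm.trans hf.1) p4
          · exact absurd hf (fun hff => PCPQ.noFB col hsym hmono v v2 v3 v4
              n12 n13 n14 n23 n24 n34 p1 p2 p3 p4 hno5
              x h1 h2 h3 h4 u0 hu0.1 hu0.2.1 hu0.2.2.1 hu0.2.2.2 hxu hff hbu)
        · exact hb
      have hw0b := hall w0 hw0.1 hw0.2.1 hw0.2.2.1 hw0.2.2.2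
      have hd := PCPQ.diagB col hsym hmono v v2 v3 v4 n12 n13 n14 n23 n24 n34 p1 p2 p3 p4 hno5
        u0 hu0.1 hu0.2.1 hu0.2.2.1 hu0.2.2.2 w0 hw0.1 hw0.2.1 hw0.2.2.1 hw0.2.2.2 hu0w0 hbu hw0b
      set f := fun z => if z = v then col v v4 else if z = v2 then col v v2
        else if z = v3 then col v2 v3 else col v3 v4 with hf
      have fv : f v = col v v4 := by simp [hf]
      have fv2 : f v2 = col v v2 := by simp [hf, Ne.symm n12]
      have fv3 : f v3 = col v2 v3 := by simp [hf, Ne.symm n13, Ne.symm n23]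
      have fv4 : f v4 = col v3 v4 := by simp [hf, Ne.symm n14, Ne.symm n24, Ne.symm n34]
      have s21 : col v2 v = col v v2 := hsym _ _
      have s31 : col v3 v = col v v3 := hsym _ _
      have s41 : col v4 v = col v v4 := hsym _ _
      have s32 : col v3 v2 = col v2 v3 := hsym _ _
      have s42 : col v4 v2 = col v2 v4 := hsym _ _
      have s43 : col v4 v3 = col v3 v4 := hsym _ _
      refine ⟨{v, v2, v3, v4}, ⟨v, by simp⟩, f, ?_, ?_⟩
      · intro a ha b hb hab
        simp only [Set.mem_insert_iff, Set.mem_singleton_iff] at ha hb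
        rcases ha with rfl | rfl | rfl | rfl <;> rcases hb with rfl | rfl | rfl | rfl <;>
          first
          | exact absurd rfl hab
          | omega
      · intro a ha y hy
        simp only [Set.mem_insert_iff, Set.mem_singleton_iff, not_or] at hy
        have hby := hall y hy.1 hy.2.1 hy.2.2.1 hy.2.2.2
        simp only [Set.mem_insert_iff, Set.mem_singleton_iff] at ha
        rcases ha with rfl | rfl | rfl | rfl
        · rw [fv]; exact hby.1
        · rw [fv2]; exact hby.2.1
        · rw [fv3]; exact hby.2.2.1
        · rw [fv4]; exact hby.2.2.2
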